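/- Let Ω ⊆ ℝ² be a connected open set and let λ : ℝ² → ℂ be continuously differentiable on Ω with Im λ > 0 and λ_x + λ·λ_y = 0 on Ω. Assume Φ ≠ 0 at every point of Ω and that the canonical coordinate ξ is injective on Ω. Then ξ(Ω) is an open subset of ℂ, and for every function f : ℝ² → ℂ continuously differentiable on Ω the following are equivalent: (i) f_x + λ·f_y = 0 at every point of Ω; (ii) there exists a function g : ℂ → ℂ holomorphic on ξ(Ω) with f(x,y) = g(ξ(x,y)) for all (x,y) ∈ Ω. Moreover, in case (ii) the values of g on ξ(Ω) are uniquely determined by f. -/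

import Mathlib

open Complex

noncomputable def pdx (f : ℝ × ℝ → ℂ) (p : ℝ × ℝ) : ℂ := fderiv ℝ f p (1, 0)
noncomputable def pdy (f : ℝ × ℝ → ℂ) (p : ℝ × ℝ) : ℂ := fderiv ℝ f p (0, 1)

/-- The canonical coordinate `ξ(x,y) = y − λ(x,y)·x`. -/
noncomputable def xiC (lam : ℝ × ℝ → ℂ) (p : ℝ × ℝ) : ℂ := (p.2 : ℂ) - lam p * (p.1 : ℂ)

/-- The characteristic Jacobian. -/
noncomputable def Phi (lam : ℝ × ℝ → ℂ) (p : ℝ × ℝ) : ℂ :=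
  (lam p - (starRingEnd ℂ) (lam p))
    - (p.1 : ℂ) * ((starRingEnd ℂ) (pdx lam p) + lam p * (starRingEnd ℂ) (pdy lam p))

/-- General rigid holomorphic function, global form: on a connected open set
where `Φ ≠ 0` and `ξ` is injective, solutions of `f_x + λ f_y = 0` are exactly
the functions `g ∘ ξ` with `g` holomorphic on the open set `ξ(Ω)`, and `g` is
uniquely determined on `ξ(Ω)` by `f`. -/
lemma clm_ext_prod {T S : ℝ × ℝ →L[ℝ] ℂ}
    (h1 : T (1,0) = S (1,0)) (h2 : T (0,1) = S (0,1)) : T = S := by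
  apply ContinuousLinearMap.ext; intro v
  have hv : (v : ℝ × ℝ) = v.1 • ((1:ℝ),(0:ℝ)) + v.2 • ((0:ℝ),(1:ℝ)) := by
    simp [Prod.ext_iff]
  rw [hv, map_add, map_add, map_smul, map_smul, map_smul, map_smul, h1, h2]

noncomputable def rigidLinMap (a μ : ℂ) : (ℝ × ℝ) →ₗ[ℝ] ℂ where
  toFun v := μ * ((v.2 : ℂ) - a * (v.1 : ℂ))
  map_add' v w := by simp only [Prod.fst_add, Prod.snd_add]; push_cast; ring
  map_smul' r v := by
    simp only [Prod.smul_fst, Prod.smul_snd, smul_eq_mul, RingHom.id_apply, Complex.real_smul]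
    push_cast; ring

lemma rigidLinMap_bijective (a μ : ℂ) (ha : a.im ≠ 0) (hμ : μ ≠ 0) :
    Function.Bijective (rigidLinMap a μ) := by
  constructor
  · intro v w h
    simp only [rigidLinMap, LinearMap.coe_mk, AddHom.coe_mk] at h
    have h2 := mul_left_cancel₀ hμ h
    have hi := congrArg Complex.im h2
    have hr := congrArg Complex.re h2
    simp [Complex.sub_im, Complex.mul_im, Complex.sub_re, Complex.mul_re] at hi hr
    have h1 : v.1 = w.1 := by
      rcases hi with hi | hi
      · exact hi
      · exact absurd hi ha
    have h2' : v.2 = w.2 := by rw [h1] at hr; linarith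
    exact Prod.ext h1 h2'
  · intro w
    refine ⟨(-((w/μ).im)/a.im, (w/μ).re + a.re * (-((w/μ).im)/a.im)), ?_⟩
    simp only [rigidLinMap, LinearMap.coe_mk, AddHom.coe_mk]
    have key : ((((w/μ).re + a.re * (-((w/μ).im)/a.im) : ℝ)) : ℂ)
        - a * ((-((w/μ).im)/a.im : ℝ) : ℂ) = w / μ := by
      apply Complex.ext
      · simp [Complex.sub_re, Complex.mul_re]
      · simp only [Complex.sub_im, Complex.mul_im, Complex.ofReal_im, Complex.ofReal_re]
        rw [mul_div_cancel₀ _ ha]; ring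
    rw [key, mul_div_cancel₀ _ hμ]

noncomputable def rigidEquiv (a μ : ℂ) (ha : a.im ≠ 0) (hμ : μ ≠ 0) : (ℝ × ℝ) ≃L[ℝ] ℂ :=
  (LinearEquiv.ofBijective _ (rigidLinMap_bijective a μ ha hμ)).toContinuousLinearEquiv

lemma rigidEquiv_apply (a μ : ℂ) (ha : a.im ≠ 0) (hμ : μ ≠ 0) (v : ℝ × ℝ) :
    rigidEquiv a μ ha hμ v = μ * ((v.2 : ℂ) - a * (v.1 : ℂ)) := rfl

lemma phi_factor {lam : ℝ × ℝ → ℂ} {p : ℝ × ℝ}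
    (hrig : pdx lam p + lam p * pdy lam p = 0) :
    Phi lam p = (lam p - (starRingEnd ℂ) (lam p))
      * (starRingEnd ℂ) (1 - (p.1 : ℂ) * pdy lam p) := by
  have hlx : pdx lam p = -(lam p * pdy lam p) := by linear_combination hrig
  simp only [Phi, hlx, map_neg, map_mul, map_sub, map_one, Complex.conj_ofReal]
  ring

lemma mu_ne {lam : ℝ × ℝ → ℂ} {p : ℝ × ℝ}
    (hrig : pdx lam p + lam p * pdy lam p = 0) (hΦ : Phi lam p ≠ 0) :
    (1 - (p.1 : ℂ) * pdy lam p) ≠ 0 := by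
  intro h
  exact hΦ (by rw [phi_factor hrig, h, map_zero, mul_zero])

lemma xi_deriv {Ω : Set (ℝ × ℝ)} (hΩ : IsOpen Ω) {lam : ℝ × ℝ → ℂ}
    (hlam : ContDiffOn ℝ 1 lam Ω) {p : ℝ × ℝ} (hp : p ∈ Ω)
    (hrig : pdx lam p + lam p * pdy lam p = 0)
    (ha : (lam p).im ≠ 0) (hμ : (1 - (p.1 : ℂ) * pdy lam p) ≠ 0) :
    HasStrictFDerivAt (xiC lam)
      ((rigidEquiv (lam p) (1 - (p.1 : ℂ) * pdy lam p) ha hμ : (ℝ × ℝ) →L[ℝ] ℂ)) p := by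
  have hlamp : HasStrictFDerivAt lam (fderiv ℝ lam p) p :=
    (hlam.contDiffAt (hΩ.mem_nhds hp)).hasStrictFDerivAt one_ne_zero
  have hfst : HasStrictFDerivAt (fun v : ℝ × ℝ => ((v.1 : ℝ) : ℂ))
      (Complex.ofRealCLM.comp (ContinuousLinearMap.fst ℝ ℝ ℝ)) p :=
    (Complex.ofRealCLM.comp (ContinuousLinearMap.fst ℝ ℝ ℝ)).hasStrictFDerivAt
  have hsnd : HasStrictFDerivAt (fun v : ℝ × ℝ => ((v.2 : ℝ) : ℂ))
      (Complex.ofRealCLM.comp (ContinuousLinearMap.snd ℝ ℝ ℝ)) p :=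
    (Complex.ofRealCLM.comp (ContinuousLinearMap.snd ℝ ℝ ℝ)).hasStrictFDerivAt
  have hmul := hlamp.mul hfst
  have hsub := hsnd.sub hmul
  have hEq : (Complex.ofRealCLM.comp (ContinuousLinearMap.snd ℝ ℝ ℝ)
      - (lam p • (Complex.ofRealCLM.comp (ContinuousLinearMap.fst ℝ ℝ ℝ))
        + (p.1 : ℂ) • fderiv ℝ lam p))
      = (rigidEquiv (lam p) (1 - (p.1 : ℂ) * pdy lam p) ha hμ : (ℝ × ℝ) →L[ℝ] ℂ) := by
    apply clm_ext_prod
    · show _ = rigidEquiv (lam p) (1 - (p.1 : ℂ) * pdy lam p) ha hμ (1,0)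
      rw [rigidEquiv_apply]
      simp only [ContinuousLinearMap.sub_apply, ContinuousLinearMap.add_apply,
        ContinuousLinearMap.smul_apply, ContinuousLinearMap.comp_apply,
        ContinuousLinearMap.coe_fst', ContinuousLinearMap.coe_snd',
        Complex.ofRealCLM_apply, smul_eq_mul]
      push_cast
      have hrig' : fderiv ℝ lam p (1,0) + lam p * fderiv ℝ lam p (0,1) = 0 := hrig
      simp only [pdx, pdy]
      linear_combination (-(p.1 : ℂ)) * hrig'
    · show _ = rigidEquiv (lam p) (1 - (p.1 : ℂ) * pdy lam p) ha hμ (0,1)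
      rw [rigidEquiv_apply]
      simp only [ContinuousLinearMap.sub_apply, ContinuousLinearMap.add_apply,
        ContinuousLinearMap.smul_apply, ContinuousLinearMap.comp_apply,
        ContinuousLinearMap.coe_fst', ContinuousLinearMap.coe_snd',
        Complex.ofRealCLM_apply, smul_eq_mul]
      push_cast
      simp only [pdy]
      ring
  rw [← hEq]
  exact hsub

theorem stmt14
    (Ω : Set (ℝ × ℝ)) (hΩ : IsOpen Ω) (hconn : IsConnected Ω)
    (lam : ℝ × ℝ → ℂ)
    (hlam : ContDiffOn ℝ 1 lam Ω)
    (him : ∀ p ∈ Ω, 0 < (lam p).im)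
    (hrigid : ∀ p ∈ Ω, pdx lam p + lam p * pdy lam p = 0)
    (hΦ : ∀ p ∈ Ω, Phi lam p ≠ 0)
    (hinj : Set.InjOn (xiC lam) Ω) :
    IsOpen (xiC lam '' Ω) ∧
    ∀ f : ℝ × ℝ → ℂ, ContDiffOn ℝ 1 f Ω →
      (((∀ p ∈ Ω, pdx f p + lam p * pdy f p = 0) ↔
        (∃ g : ℂ → ℂ, DifferentiableOn ℂ g (xiC lam '' Ω) ∧
          ∀ p ∈ Ω, f p = g (xiC lam p))) ∧
      (∀ g₁ g₂ : ℂ → ℂ,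
        DifferentiableOn ℂ g₁ (xiC lam '' Ω) → DifferentiableOn ℂ g₂ (xiC lam '' Ω) →
        (∀ p ∈ Ω, f p = g₁ (xiC lam p)) → (∀ p ∈ Ω, f p = g₂ (xiC lam p)) →
        Set.EqOn g₁ g₂ (xiC lam '' Ω))) := by
  classical
  -- package the per-point data
  have key : ∀ p ∈ Ω, ∃ E : (ℝ × ℝ) ≃L[ℝ] ℂ,
      (∀ v : ℝ × ℝ, E v = (1 - (p.1 : ℂ) * pdy lam p) * ((v.2 : ℂ) - lam p * (v.1 : ℂ))) ∧
      HasStrictFDerivAt (xiC lam) (E : (ℝ × ℝ) →L[ℝ] ℂ) p := by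
    intro p hp
    have ha : (lam p).im ≠ 0 := (him p hp).ne'
    have hμ := mu_ne (hrigid p hp) (hΦ p hp)
    exact ⟨rigidEquiv (lam p) _ ha hμ, rigidEquiv_apply _ _ ha hμ,
      xi_deriv hΩ hlam hp (hrigid p hp) ha hμ⟩
  have hopen : IsOpen (xiC lam '' Ω) := by
    rw [isOpen_iff_mem_nhds]
    rintro q ⟨p, hp, rfl⟩
    obtain ⟨E, -, hxi⟩ := key p hp
    rw [← hxi.map_nhds_eq_of_equiv]
    exact Filter.image_mem_map (hΩ.mem_nhds hp)
  refine ⟨hopen, ?_⟩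
  intro f hf
  constructor
  · constructor
    · -- (i) → (ii)
      intro hPDE
      refine ⟨fun z => f (Function.invFunOn (xiC lam) Ω z), ?_, ?_⟩
      · rintro q ⟨p, hp, rfl⟩
        obtain ⟨E, hEapp, hxi⟩ := key p hp
        set ψ := hxi.localInverse (xiC lam) _ p with hψdef
        have hψq : ψ (xiC lam p) = p := hxi.localInverse_apply_image
        have hψd : HasStrictFDerivAt ψ (E.symm : ℂ →L[ℝ] (ℝ × ℝ)) (xiC lam p) :=
          hxi.to_localInverse
        have hev1 : ∀ᶠ w in nhds (xiC lam p), xiC lam (ψ w) = w := hxi.eventually_right_inverse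
        have hev2 : ∀ᶠ w in nhds (xiC lam p), ψ w ∈ Ω := by
          have : ContinuousAt ψ (xiC lam p) := hψd.continuousAt
          exact this.preimage_mem_nhds (by rw [hψq]; exact hΩ.mem_nhds hp)
        have heq : (fun z => f (Function.invFunOn (xiC lam) Ω z)) =ᶠ[nhds (xiC lam p)]
            (f ∘ ψ) := by
          filter_upwards [hev1, hev2] with w h1 h2
          have hex : ∃ a ∈ Ω, xiC lam a = w := ⟨ψ w, h2, h1⟩
          have hmem := Function.invFunOn_mem hex
          have happ := Function.invFunOn_eq hex
          have : Function.invFunOn (xiC lam) Ω w = ψ w :=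
            hinj hmem h2 (by rw [happ, h1])
          simp [Function.comp, this]
        -- differentiability of f ∘ ψ over ℂ
        have hfd : HasFDerivAt f (fderiv ℝ f p) p :=
          ((hf.contDiffAt (hΩ.mem_nhds hp)).differentiableAt one_ne_zero).hasFDerivAt
        have hcomp : HasFDerivAt (f ∘ ψ)
            ((fderiv ℝ f p).comp (E.symm : ℂ →L[ℝ] (ℝ × ℝ))) (xiC lam p) :=
          HasFDerivAt.comp _ (by rw [hψq]; exact hfd) hψd.hasFDerivAt
        set μ : ℂ := 1 - (p.1 : ℂ) * pdy lam p with hμdef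
        have hμ := mu_ne (hrigid p hp) (hΦ p hp)
        set c : ℂ := pdy f p / μ with hcdef
        have hlin : ∀ v : ℝ × ℝ, fderiv ℝ f p v = c * E v := by
          intro v
          have hvdec : (v : ℝ × ℝ) = v.1 • ((1:ℝ),(0:ℝ)) + v.2 • ((0:ℝ),(1:ℝ)) := by
            simp [Prod.ext_iff]
          have hfx : pdx f p = -(lam p * pdy f p) := by linear_combination hPDE p hp
          rw [hEapp v]
          conv_lhs => rw [hvdec]
          rw [map_add, map_smul, map_smul]
          show v.1 • pdx f p + v.2 • pdy f p = _
          rw [hfx]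
          have hμ' : μ ≠ 0 := hμ
          have hcμ : c * μ = pdy f p := div_mul_cancel₀ _ hμ'
          simp only [Complex.real_smul]
          linear_combination ((lam p * (v.1 : ℂ)) - (v.2 : ℂ)) * hcμ
        have hmapeq : (fderiv ℝ f p).comp (E.symm : ℂ →L[ℝ] (ℝ × ℝ))
            = ContinuousLinearMap.restrictScalars ℝ (c • ContinuousLinearMap.id ℂ ℂ) := by
          apply ContinuousLinearMap.ext
          intro w
          have h1 := hlin (E.symm w)
          rw [E.apply_symm_apply] at h1
          simpa using h1
        rw [hmapeq] at hcomp
        have hreal : DifferentiableAt ℝ (f ∘ ψ) (xiC lam p) := hcomp.differentiableAt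
        have hcplx : DifferentiableAt ℂ (f ∘ ψ) (xiC lam p) :=
          (differentiableAt_iff_restrictScalars ℝ hreal).mpr
            ⟨c • ContinuousLinearMap.id ℂ ℂ, hcomp.fderiv.symm⟩
        exact (heq.differentiableAt_iff.mpr hcplx).differentiableWithinAt
      · intro p hp
        show f p = f (Function.invFunOn (xiC lam) Ω (xiC lam p))
        rw [hinj.leftInvOn_invFunOn hp]
    · -- (ii) → (i)
      rintro ⟨g, hg, hfg⟩ p hp
      obtain ⟨E, hEapp, hxi⟩ := key p hp
      have hq : xiC lam p ∈ xiC lam '' Ω := ⟨p, hp, rfl⟩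
      have hgq : DifferentiableAt ℂ g (xiC lam p) :=
        hg.differentiableAt (hopen.mem_nhds hq)
      have hcomp : HasFDerivAt (g ∘ xiC lam)
          ((ContinuousLinearMap.restrictScalars ℝ (fderiv ℂ g (xiC lam p))).comp
            (E : (ℝ × ℝ) →L[ℝ] ℂ)) p :=
        HasFDerivAt.comp _ (hgq.hasFDerivAt.restrictScalars ℝ) hxi.hasFDerivAt
      have hfeq : f =ᶠ[nhds p] (g ∘ xiC lam) :=
        Filter.eventuallyEq_of_mem (hΩ.mem_nhds hp) (fun x hx => hfg x hx)
      have hfderiv : fderiv ℝ f p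
          = (ContinuousLinearMap.restrictScalars ℝ (fderiv ℂ g (xiC lam p))).comp
            (E : (ℝ × ℝ) →L[ℝ] ℂ) := by
        rw [hfeq.fderiv_eq, hcomp.fderiv]
      have hGlin : ∀ z : ℂ, (fderiv ℂ g (xiC lam p)) z
          = z * (fderiv ℂ g (xiC lam p)) 1 := by
        intro z
        conv_lhs => rw [show z = z • (1:ℂ) by simp]
        rw [map_smul, smul_eq_mul]
      have hG : ∀ z : ℂ,
          (ContinuousLinearMap.restrictScalars ℝ (fderiv ℂ g (xiC lam p))) z
            = z * (fderiv ℂ g (xiC lam p)) 1 := fun z => hGlin z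
      simp only [pdx, pdy, hfderiv, ContinuousLinearMap.comp_apply,
        ContinuousLinearMap.coe_coe, ContinuousLinearEquiv.coe_coe]
      rw [hEapp, hEapp, hG, hG]
      push_cast
      ring
  · -- uniqueness
    rintro g₁ g₂ - - h₁ h₂ q ⟨p, hp, rfl⟩
    rw [← h₁ p hp, ← h₂ p hp]
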